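/- Suppose 0 ≤ |m| − k + 1 < k. Then the dimension of the kernel of the linear map f_{k,m} : V_{k−1} → V_k equals w(m, |m| − k + 1). -/

import Mathlib

open Finsupp

/-- Multiindices `J : Fin n → ℕ` of total degree `j`. -/
abbrev MIdx (n j : ℕ) : Type := {J : Fin n → ℕ // ∑ i, J i = j}

/-- The complex vector space `V_j` with basis `{e_J : |J| = j}`. -/
abbrev V (n j : ℕ) : Type := MIdx n j →₀ ℂ

/-- `J + 1ᵢ` : the multiindex `J` with its `i`-th entry increased by 1. -/
def incr {n : ℕ} (J : Fin n → ℕ) (i : Fin n) : Fin n → ℕ :=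
  Function.update J i (J i + 1)

lemma sum_incr {n : ℕ} (J : Fin n → ℕ) (i : Fin n) :
    ∑ x, incr J i x = (∑ x, J x) + 1 := by
  unfold incr
  rw [Finset.sum_update_of_mem (Finset.mem_univ i),
    Finset.sum_eq_sum_sdiff_singleton_add (Finset.mem_univ i) J]
  ring

/-- The map `f_{j+1,m} : V_j → V_{j+1}`, `e_J ↦ ∑ᵢ (jᵢ+1)(mᵢ−jᵢ) e_{J+1ᵢ}`. -/
noncomputable def fMap (n : ℕ) (m : Fin n → ℕ) (j : ℕ) : V n j →ₗ[ℂ] V n (j + 1) :=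
  Finsupp.lift (V n (j + 1)) ℂ (MIdx n j) fun J =>
    ∑ i, (((J.1 i : ℂ) + 1) * ((m i : ℂ) - (J.1 i : ℂ))) •
      Finsupp.single (⟨incr J.1 i, by rw [sum_incr, J.2]⟩ : MIdx n (j + 1)) (1 : ℂ)

/-- `d(m,j)`: the number of multiindices `J` with `J i ≤ m i` for all `i` and `|J| = j`. -/
noncomputable def dCount (n : ℕ) (m : Fin n → ℕ) (j : ℤ) : ℕ :=
  Set.ncard {J : Fin n → ℕ | (∀ i, J i ≤ m i) ∧ ∑ i, (J i : ℤ) = j}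

/-- `w(m,j) = d(m,j) − d(m,j−1)`. -/
noncomputable def w (n : ℕ) (m : Fin n → ℕ) (j : ℤ) : ℤ :=
  (dCount n m j : ℤ) - (dCount n m (j - 1) : ℤ)


namespace KDR


variable {n : ℕ}

def decr {n : ℕ} (J : Fin n → ℕ) (i : Fin n) : Fin n → ℕ :=
  Function.update J i (J i - 1)

@[simp] lemma incr_self (J : Fin n → ℕ) (i : Fin n) : incr J i i = J i + 1 :=
  Function.update_self _ _ _

@[simp] lemma decr_self (J : Fin n → ℕ) (i : Fin n) : decr J i i = J i - 1 :=
  Function.update_self _ _ _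

lemma incr_ne (J : Fin n → ℕ) {i i' : Fin n} (h : i' ≠ i) : incr J i i' = J i' :=
  Function.update_of_ne h _ _

lemma decr_ne (J : Fin n → ℕ) {i i' : Fin n} (h : i' ≠ i) : decr J i i' = J i' :=
  Function.update_of_ne h _ _

lemma decr_incr (J : Fin n → ℕ) (i : Fin n) : decr (incr J i) i = J := by
  funext i'
  by_cases h : i' = i
  · subst h; simp [decr, incr]
  · simp [decr_ne _ h, incr_ne _ h]

lemma incr_decr (J : Fin n → ℕ) (i : Fin n) (h : J i ≠ 0) : incr (decr J i) i = J := by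
  funext i'
  by_cases h' : i' = i
  · subst h'; simp [incr, decr]; omega
  · simp [decr_ne _ h', incr_ne _ h']

lemma decr_incr_comm (J : Fin n → ℕ) {i i' : Fin n} (h : i ≠ i') :
    decr (incr J i) i' = incr (decr J i') i := by
  unfold incr decr
  rw [Function.update_of_ne h.symm, Function.update_of_ne h, Function.update_comm h]

lemma incr_injective (i : Fin n) : Function.Injective (fun J => incr J i) := by
  intro J J' h
  have := congrArg (fun K => decr K i) h
  simpa [decr_incr] using this

lemma sum_decr (J : Fin n → ℕ) (i : Fin n) (h : J i ≠ 0) :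
    (∑ x, decr J i x) + 1 = ∑ x, J x := by
  have := sum_incr (decr J i) i
  rw [incr_decr J i h] at this
  omega

/-- The ambient space: finitely supported functions on all multiindices. -/
abbrev W (n : ℕ) : Type := (Fin n → ℕ) →₀ ℂ

noncomputable def Fbig (m : Fin n → ℕ) : W n →ₗ[ℂ] W n :=
  Finsupp.lift (W n) ℂ (Fin n → ℕ) fun J =>
    ∑ i, (((J i : ℂ) + 1) * ((m i : ℂ) - (J i : ℂ))) • Finsupp.single (incr J i) (1 : ℂ)

noncomputable def Ebig : W n →ₗ[ℂ] W n :=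
  Finsupp.lift (W n) ℂ (Fin n → ℕ) fun J =>
    ∑ i, if J i = 0 then 0 else Finsupp.single (decr J i) (1 : ℂ)

noncomputable def Hbig (m : Fin n → ℕ) : W n →ₗ[ℂ] W n :=
  Finsupp.lift (W n) ℂ (Fin n → ℕ) fun J =>
    ((∑ i, (m i : ℂ)) - 2 * (∑ i, J i : ℕ)) • Finsupp.single J (1 : ℂ)

lemma lift_single {α : Type*} {N : Type*} [AddCommGroup N] [Module ℂ N]
    (f : α → N) (J : α) (c : ℂ) :
    Finsupp.lift N ℂ α f (Finsupp.single J c) = c • f J := by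
  rw [Finsupp.lift_apply, Finsupp.sum_single_index (by simp)]

lemma Fbig_single (m : Fin n → ℕ) (J : Fin n → ℕ) :
    Fbig m (Finsupp.single J 1) =
      ∑ i, (((J i : ℂ) + 1) * ((m i : ℂ) - (J i : ℂ))) • Finsupp.single (incr J i) (1 : ℂ) := by
  rw [Fbig, lift_single, one_smul]

lemma Ebig_single (J : Fin n → ℕ) :
    Ebig (Finsupp.single J (1:ℂ)) =
      ∑ i, if J i = 0 then 0 else Finsupp.single (decr J i) (1 : ℂ) := by
  rw [Ebig, lift_single, one_smul]

lemma Hbig_single (m : Fin n → ℕ) (J : Fin n → ℕ) :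
    Hbig m (Finsupp.single J (1:ℂ)) =
      ((∑ i, (m i : ℂ)) - 2 * (∑ i, J i : ℕ)) • Finsupp.single J (1 : ℂ) := by
  rw [Hbig, lift_single, one_smul]

lemma comm_EF (m : Fin n → ℕ) :
    Ebig ∘ₗ Fbig m = Fbig m ∘ₗ Ebig + Hbig m := by
  apply Finsupp.lhom_ext
  intro J c
  have hc : (Finsupp.single J c : W n) = c • Finsupp.single J (1:ℂ) := by
    rw [Finsupp.smul_single, smul_eq_mul, mul_one]
  simp only [hc, map_smul, LinearMap.comp_apply, LinearMap.add_apply]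
  congr 1
  rw [Fbig_single, map_sum, Ebig_single, map_sum, Hbig_single]
  simp only [map_smul, Ebig_single]
  -- rewrite the FE side: F applied to ite
  have hFE : ∀ i' : Fin n, Fbig m (if J i' = 0 then 0 else Finsupp.single (decr J i') (1:ℂ))
      = ∑ i, (if J i' = 0 then 0 else
          ((((decr J i') i : ℂ) + 1) * ((m i : ℂ) - ((decr J i') i : ℂ))) •
            Finsupp.single (incr (decr J i') i) (1 : ℂ)) := by
    intro i'
    by_cases h : J i' = 0
    · simp [h]
    · simp only [h, if_false, Fbig_single]
  simp only [hFE]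
  rw [Finset.sum_comm]
  rw [← sub_eq_iff_eq_add', ← Finset.sum_sub_distrib]
  have key : ∀ i : Fin n,
      ((((J i : ℂ) + 1) * ((m i : ℂ) - (J i : ℂ))) •
          (∑ i', if incr J i i' = 0 then 0 else Finsupp.single (decr (incr J i) i') (1:ℂ)))
        - (∑ i', (if J i' = 0 then 0 else
            ((((decr J i') i : ℂ) + 1) * ((m i : ℂ) - ((decr J i') i : ℂ))) •
              Finsupp.single (incr (decr J i') i) (1 : ℂ)))
      = ((m i : ℂ) - 2 * (J i : ℂ)) • Finsupp.single J (1:ℂ) := by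
    intro i
    rw [Finset.smul_sum, ← Finset.sum_sub_distrib]
    rw [Finset.sum_eq_single i]
    · -- diagonal term
      have h1 : incr J i i = J i + 1 := incr_self J i
      rw [h1]
      simp only [Nat.succ_ne_zero, if_false, decr_incr]
      by_cases h : J i = 0
      · simp [h]
      · simp only [h, if_false, decr_self, incr_decr J i h]
        rw [← sub_smul]
        congr 1
        have : ((J i - 1 : ℕ) : ℂ) = (J i : ℂ) - 1 := by
          have := Nat.succ_pred_eq_of_pos (Nat.pos_of_ne_zero h)
          push_cast [Nat.cast_pred (Nat.pos_of_ne_zero h)]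
          ring
        rw [this]
        ring
    · -- off-diagonal terms vanish
      intro i' _ hne
      rw [incr_ne J hne]
      by_cases h : J i' = 0
      · simp [h]
      · simp only [h, if_false]
        rw [decr_incr_comm J (Ne.symm hne), decr_ne J (Ne.symm hne), sub_eq_zero]
    · intro h; exact absurd (Finset.mem_univ i) h
  rw [Finset.sum_congr rfl (fun i _ => key i)]
  rw [← Finset.sum_smul]
  congr 1
  push_cast
  rw [Finset.sum_sub_distrib, Finset.mul_sum]


/-- ℤ-graded homogeneity of an element of `W n`. -/
def HomogZ (x : W n) (t : ℤ) : Prop := ∀ J ∈ x.support, (∑ i, (J i : ℤ)) = t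

lemma homogZ_neg_eq_zero {x : W n} {t : ℤ} (hx : HomogZ x t) (ht : t < 0) : x = 0 := by
  rw [← Finsupp.support_eq_empty, Finset.eq_empty_iff_forall_notMem]
  intro J hJ
  have := hx J hJ
  have : (0:ℤ) ≤ ∑ i, (J i : ℤ) := Finset.sum_nonneg (fun i _ => Int.natCast_nonneg _)
  omega

lemma homogZ_Ebig {x : W n} {t : ℤ} (hx : HomogZ x t) : HomogZ (Ebig x) (t - 1) := by
  intro J hJ
  rw [Ebig, Finsupp.lift_apply] at hJ
  have h1 := Finsupp.support_sum hJ
  rw [Finset.mem_biUnion] at h1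
  obtain ⟨K, hK, hJK⟩ := h1
  have h2 := Finsupp.support_smul hJK
  have h3 := Finsupp.support_finset_sum h2
  rw [Finset.mem_biUnion] at h3
  obtain ⟨i, _, hJi⟩ := h3
  by_cases h : K i = 0
  · simp [h] at hJi
  · simp only [h, if_false] at hJi
    have hJd : J = decr K i := by
      have := Finsupp.support_single_subset hJi
      simpa using this
    subst hJd
    have hs := sum_decr K i h
    have := hx K hK
    have : (∑ i, (K i : ℤ)) = t := this
    have hcast : (∑ x, (decr K i x : ℤ)) + 1 = ∑ x, (K x : ℤ) := by
      push_cast [← Nat.cast_sum]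
      exact_mod_cast congrArg (Nat.cast : ℕ → ℤ) hs
    omega

lemma homogZ_smul {x : W n} {t : ℤ} (c : ℂ) (hx : HomogZ x t) : HomogZ (c • x) t := by
  intro J hJ
  exact hx J (Finsupp.support_smul hJ)

lemma Hbig_eigen (m : Fin n → ℕ) {x : W n} {t : ℤ} (hx : HomogZ x t) :
    Hbig m x = ((∑ i, (m i : ℂ)) - 2 * (t : ℂ)) • x := by
  rw [Hbig, Finsupp.lift_apply]
  have step : x.sum (fun J c => c • ((∑ i, (m i : ℂ)) - 2 * (∑ i, J i : ℕ)) • Finsupp.single J (1:ℂ))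
      = x.sum (fun J c => ((∑ i, (m i : ℂ)) - 2 * (t:ℂ)) • Finsupp.single J c) := by
    apply Finsupp.sum_congr
    intro J hJ
    have h1 := hx J hJ
    have hdeg : ((∑ i, J i : ℕ) : ℂ) = (t : ℂ) := by
      have h2 : ((∑ i, J i : ℕ) : ℤ) = t := by push_cast; exact h1
      exact_mod_cast congrArg (Int.cast : ℤ → ℂ) h2
    rw [hdeg, smul_comm, Finsupp.smul_single, smul_eq_mul, mul_one]
  rw [step, ← Finsupp.smul_sum, Finsupp.sum_single]

/-- Key injectivity: `F` is injective on homogeneous elements of degree `d` with `2d < |m|`. -/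
lemma Fbig_inj_homog (m : Fin n → ℕ) {d : ℕ} (hd : 2 * d < ∑ i, m i) {x : W n}
    (hx : HomogZ x (d : ℤ)) (hFx : Fbig m x = 0) : x = 0 := by
  by_contra hne
  set M : ℕ := ∑ i, m i with hM
  have hMc : (∑ i, (m i : ℂ)) = (M : ℂ) := by rw [hM]; push_cast; ring
  set v : ℕ → W n := fun r => ((Ebig : W n →ₗ[ℂ] W n) ^ r) x with hv
  have hv0 : v 0 = x := rfl
  have hvs : ∀ r, v (r + 1) = Ebig (v r) := by
    intro r
    rw [hv]
    simp only [pow_succ', Module.End.mul_apply]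
  have hhom : ∀ r, HomogZ (v r) ((d : ℤ) - r) := by
    intro r
    induction r with
    | zero => rw [hv0]; simpa using hx
    | succ r ih =>
      rw [hvs]
      have := homogZ_Ebig ih
      convert this using 1
      push_cast; ring
  -- the commutator identity in applied form
  have hcomm : ∀ y : W n, Fbig m (Ebig y) = Ebig (Fbig m y) - Hbig m y := by
    intro y
    have := congrArg (fun (g : W n →ₗ[ℂ] W n) => g y) (comm_EF m)
    simp only [LinearMap.comp_apply, LinearMap.add_apply] at this
    rw [this]; abel
  have hrec : ∀ r, Fbig m (v (r + 1)) =
      (-((r:ℂ) + 1) * ((M : ℂ) - 2 * d + r)) • v r := by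
    intro r
    induction r with
    | zero =>
      rw [hvs, hcomm, hv0, hFx, map_zero, Hbig_eigen m hx, hMc]
      push_cast
      rw [zero_sub, ← neg_smul]
      congr 1; ring
    | succ r ih =>
      rw [hvs (r+1), hcomm, ih, map_smul, ← hvs, Hbig_eigen m (hhom (r+1)), hMc,
        ← sub_smul]
      congr 1
      push_cast
      ring
  have hcoef : ∀ r : ℕ, (-((r:ℂ) + 1) * ((M : ℂ) - 2 * d + r)) ≠ 0 := by
    intro r
    apply mul_ne_zero
    · exact neg_ne_zero.mpr (Nat.cast_add_one_ne_zero (R := ℂ) r)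
    · have h1 : ((M : ℤ) - 2 * d + r) ≠ 0 := by omega
      have : (((M : ℤ) - 2 * d + r : ℤ) : ℂ) ≠ 0 := by
        exact_mod_cast Int.cast_ne_zero.mpr h1
      convert this using 1
      push_cast; ring
  have hvne : ∀ r, v r ≠ 0 := by
    intro r
    induction r with
    | zero => rwa [hv0]
    | succ r ih =>
      intro hz
      have := hrec r
      rw [hz, map_zero] at this
      exact ih ((smul_eq_zero.mp this.symm).resolve_left (hcoef r))
  have : v (d + 1) = 0 := by
    apply homogZ_neg_eq_zero (hhom (d+1))
    push_cast; omega
  exact hvne (d+1) this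

lemma Fbig_apply_coeff (m : Fin n → ℕ) (x : W n) (K : Fin n → ℕ) :
    (Fbig m x) K = ∑ J ∈ x.support, x J *
      ∑ i, (if incr J i = K then ((J i : ℂ) + 1) * ((m i : ℂ) - (J i : ℂ)) else 0) := by
  rw [Fbig, Finsupp.lift_apply, Finsupp.sum_apply]
  rw [Finsupp.sum]
  apply Finset.sum_congr rfl
  intro J _
  rw [Finsupp.smul_apply, Finset.sum_apply', smul_eq_mul, Finset.mul_sum, Finset.mul_sum]
  apply Finset.sum_congr rfl
  intro i _
  congr 1
  rw [Finsupp.smul_apply, Finsupp.single_apply, smul_eq_mul]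
  by_cases h : incr J i = K <;> simp [h]

/-- Kernel elements of `Fbig` are supported on multiindices `J ≤ m`. -/
lemma support_le_of_Fbig_eq_zero (m : Fin n → ℕ) {x : W n} (hx : Fbig m x = 0) :
    ∀ J ∈ x.support, ∀ i, J i ≤ m i := by
  by_contra hbad
  push_neg at hbad
  obtain ⟨J0, hJ0, i0', hib⟩ := hbad
  classical
  set S : (Fin n → ℕ) → Finset (Fin n) := fun J => Finset.univ.filter (fun i => m i < J i)
    with hS
  set T : Finset (Fin n → ℕ) := x.support.filter (fun J => S J = S J0) with hT
  have hJ0T : J0 ∈ T := by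
    rw [hT, Finset.mem_filter]; exact ⟨hJ0, rfl⟩
  have hSne : (S J0).Nonempty := ⟨i0', by rw [hS]; simp; omega⟩
  set i0 : Fin n := (S J0).min' hSne with hi0
  have hi0S : i0 ∈ S J0 := (S J0).min'_mem hSne
  have hi0m : ∀ J, J ∈ T → m i0 < J i0 := by
    intro J hJ
    rw [hT, Finset.mem_filter] at hJ
    have : i0 ∈ S J := hJ.2 ▸ hi0S
    rw [hS] at this; simpa using this
  obtain ⟨Js, hJsT, hJsmax⟩ := T.exists_max_image (fun J => J i0) ⟨J0, hJ0T⟩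
  have hJs_supp : Js ∈ x.support := (Finset.mem_filter.mp hJsT).1
  set K : Fin n → ℕ := incr Js i0 with hK
  -- S of K equals S J0
  have hSK : S K = S J0 := by
    have h1 : S K = S Js := by
      rw [hS]
      apply Finset.filter_congr
      intro i _
      by_cases h : i = i0
      · rw [h, hK, incr_self]
        have := hi0m Js hJsT
        omega
      · rw [hK, incr_ne _ h]
    rw [h1, (Finset.mem_filter.mp hJsT).2]
  -- contribution analysis
  have hcoeff := Fbig_apply_coeff m x K
  rw [hx] at hcoeff
  have hmain : ∑ J ∈ x.support, x J *
      ∑ i, (if incr J i = K then ((J i : ℂ) + 1) * ((m i : ℂ) - (J i : ℂ)) else 0) ≠ 0 := by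
    rw [Finset.sum_eq_single_of_mem Js hJs_supp]
    · -- the Js term is nonzero
      rw [Finset.sum_eq_single_of_mem i0 (Finset.mem_univ i0)]
      · rw [if_pos rfl]
        apply mul_ne_zero (Finsupp.mem_support_iff.mp hJs_supp)
        apply mul_ne_zero (Nat.cast_add_one_ne_zero _)
        rw [sub_ne_zero]
        intro h
        have : m i0 = Js i0 := Nat.cast_injective h
        have := hi0m Js hJsT
        omega
      · intro i _ hne
        rw [if_neg]
        intro h
        have := congrFun h i
        rw [incr_self, hK, incr_ne _ hne] at this
        omega
    · -- all other terms vanish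
      intro J hJsupp hne
      rw [Finset.sum_eq_zero, mul_zero]
      intro i _
      by_cases h : incr J i = K
      · rw [if_pos h]
        by_cases hJm : J i = m i
        · rw [hJm, sub_self, mul_zero]
        · -- derive J = Js, contradiction
          exfalso
          have hKi : K i = J i + 1 := by rw [← h, incr_self]
          have hKother : ∀ i', i' ≠ i → K i' = J i' := by
            intro i' hi'
            rw [← h, incr_ne _ hi']
          -- S J = S K
          have hSJ : S J = S K := by
            rw [hS]
            apply Finset.filter_congr
            intro a _
            by_cases ha : a = i
            · rw [ha, hKi]
              omega
            · rw [hKother a ha]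
          have hJT : J ∈ T := by
            rw [hT, Finset.mem_filter]
            exact ⟨hJsupp, by rw [hSJ, hSK]⟩
          have hle := hJsmax J hJT
          by_cases hii : i = i0
          · apply hne
            funext a
            by_cases ha : a = i
            · have h2 : K a = Js a + 1 := by rw [ha, hii, hK, incr_self]
              have h3 : K a = J a + 1 := by rw [ha, hKi]
              omega
            · have h4 : K a = Js a := by
                rw [hK]
                exact incr_ne _ (fun hc => ha (hc.trans hii.symm))
              rw [← hKother a ha, h4]
          · have h1 : J i0 = K i0 := (hKother i0 (fun hc => hii hc.symm)).symm
            have h2 : K i0 = Js i0 + 1 := by rw [hK, incr_self]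
            omega
      · rw [if_neg h]
  exact hmain hcoeff.symm

/-- Multiindices bounded by `m` with total degree `j`. -/
abbrev Gd (n : ℕ) (m : Fin n → ℕ) (j : ℕ) : Type :=
  {J : Fin n → ℕ // (∀ i, J i ≤ m i) ∧ ∑ i, J i = j}

noncomputable instance (m : Fin n → ℕ) (j : ℕ) : Fintype (Gd n m j) :=
  Fintype.ofInjective (fun J => fun i => (⟨J.1 i, Nat.lt_succ_of_le (J.2.1 i)⟩ : Fin (m i + 1)))
    (by
      intro J K h
      apply Subtype.ext
      funext i
      exact congrArg Fin.val (congrFun h i))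

instance (m : Fin n → ℕ) (j : ℕ) : DecidableEq (Gd n m j) := fun J K =>
  decidable_of_iff (J.1 = K.1) Subtype.ext_iff.symm

lemma incr_good {m J : Fin n → ℕ} (hJ : ∀ i', J i' ≤ m i') {i : Fin n} (h : J i < m i) :
    ∀ i', incr J i i' ≤ m i' := by
  intro i'
  by_cases hh : i' = i
  · rw [hh, incr_self]; omega
  · rw [incr_ne _ hh]; exact hJ i'

/-- The restriction of `F` to bounded multiindices. -/
noncomputable def Gmap (n : ℕ) (m : Fin n → ℕ) (j : ℕ) :
    (Gd n m j →₀ ℂ) →ₗ[ℂ] (Gd n m (j+1) →₀ ℂ) :=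
  Finsupp.lift _ ℂ _ (fun J => ∑ i, if h : J.1 i < m i then
    (((J.1 i : ℂ) + 1) * ((m i : ℂ) - (J.1 i : ℂ))) •
      Finsupp.single (⟨incr J.1 i, incr_good J.2.1 h, by rw [sum_incr, J.2.2]⟩ : Gd n m (j+1))
        (1:ℂ) else 0)

/-- Embeddings into the big space. -/
noncomputable def emG (n : ℕ) (m : Fin n → ℕ) (j : ℕ) : (Gd n m j →₀ ℂ) →ₗ[ℂ] W n :=
  Finsupp.lmapDomain ℂ ℂ (fun J => J.1)

noncomputable def emV (n : ℕ) (j : ℕ) : V n j →ₗ[ℂ] W n :=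
  Finsupp.lmapDomain ℂ ℂ (fun J => J.1)

noncomputable def emGV (n : ℕ) (m : Fin n → ℕ) (j : ℕ) : (Gd n m j →₀ ℂ) →ₗ[ℂ] V n j :=
  Finsupp.lmapDomain ℂ ℂ (fun J => (⟨J.1, J.2.2⟩ : MIdx n j))

lemma emG_inj (m : Fin n → ℕ) (j : ℕ) : Function.Injective (emG n m j) :=
  Finsupp.mapDomain_injective (fun J K h => Subtype.ext h)

lemma emG_single (m : Fin n → ℕ) (j : ℕ) (J : Gd n m j) (c : ℂ) :
    emG n m j (Finsupp.single J c) = Finsupp.single J.1 c := by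
  rw [emG, Finsupp.lmapDomain_apply, Finsupp.mapDomain_single]

lemma emV_single (j : ℕ) (J : MIdx n j) (c : ℂ) :
    emV n j (Finsupp.single J c) = Finsupp.single J.1 c := by
  rw [emV, Finsupp.lmapDomain_apply, Finsupp.mapDomain_single]

lemma emGV_single (m : Fin n → ℕ) (j : ℕ) (J : Gd n m j) (c : ℂ) :
    emGV n m j (Finsupp.single J c) = Finsupp.single (⟨J.1, J.2.2⟩ : MIdx n j) c := by
  rw [emGV, Finsupp.lmapDomain_apply, Finsupp.mapDomain_single]

lemma emG_support (m : Fin n → ℕ) (j : ℕ) (y : Gd n m j →₀ ℂ) :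
    (emG n m j y).support = y.support.image (fun J => J.1) := by
  rw [emG, Finsupp.lmapDomain_apply]
  exact Finsupp.mapDomain_support_of_injective (fun J K h => Subtype.ext h) y

lemma emV_support (j : ℕ) (y : V n j) :
    (emV n j y).support = y.support.image (fun J => J.1) := by
  rw [emV, Finsupp.lmapDomain_apply]
  exact Finsupp.mapDomain_support_of_injective (fun J K h => Subtype.ext h) y

lemma emV_inj (j : ℕ) : Function.Injective (emV n j) :=
  Finsupp.mapDomain_injective (fun J K h => Subtype.ext h)

lemma emGV_inj (m : Fin n → ℕ) (j : ℕ) : Function.Injective (emGV n m j) :=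
  Finsupp.mapDomain_injective
    (fun J K h => Subtype.ext (congrArg (fun (t : MIdx n j) => t.1) h))

lemma square_V (m : Fin n → ℕ) (j : ℕ) :
    (emV n (j+1)) ∘ₗ fMap n m j = Fbig m ∘ₗ emV n j := by
  apply Finsupp.lhom_ext
  intro J c
  simp only [LinearMap.comp_apply]
  rw [emV_single, fMap, lift_single, Fbig, lift_single, map_smul]
  congr 1
  rw [map_sum]
  apply Finset.sum_congr rfl
  intro i _
  rw [map_smul, emV_single]

lemma square_G (m : Fin n → ℕ) (j : ℕ) :
    (emG n m (j+1)) ∘ₗ Gmap n m j = Fbig m ∘ₗ emG n m j := by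
  apply Finsupp.lhom_ext
  intro J c
  simp only [LinearMap.comp_apply]
  rw [emG_single, Gmap, lift_single, Fbig, lift_single, map_smul]
  congr 1
  rw [map_sum]
  apply Finset.sum_congr rfl
  intro i _
  by_cases h : J.1 i < m i
  · simp only [dif_pos h]
    rw [map_smul, emG_single]
  · simp only [dif_neg h]
    rw [map_zero]
    have hmi : J.1 i = m i := le_antisymm (J.2.1 i) (not_lt.mp h)
    rw [hmi, sub_self, mul_zero, zero_smul]

lemma square_GV (m : Fin n → ℕ) (j : ℕ) :
    (emGV n m (j+1)) ∘ₗ Gmap n m j = fMap n m j ∘ₗ emGV n m j := by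
  apply Finsupp.lhom_ext
  intro J c
  simp only [LinearMap.comp_apply]
  rw [emGV_single, Gmap, lift_single, fMap, lift_single, map_smul]
  congr 1
  rw [map_sum]
  apply Finset.sum_congr rfl
  intro i _
  by_cases h : J.1 i < m i
  · simp only [dif_pos h]
    rw [map_smul, emGV_single]
  · simp only [dif_neg h]
    rw [map_zero]
    have hmi : J.1 i = m i := le_antisymm (J.2.1 i) (not_lt.mp h)
    rw [hmi, sub_self, mul_zero, zero_smul]

/-- `Gmap` is injective below the middle. -/
lemma Gmap_inj (m : Fin n → ℕ) (j : ℕ) (hj : 2 * j < ∑ i, m i) :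
    Function.Injective (Gmap n m j) := by
  rw [← LinearMap.ker_eq_bot, LinearMap.ker_eq_bot']
  intro x hx
  apply emG_inj m j
  rw [map_zero]
  apply Fbig_inj_homog m hj (x := emG n m j x)
  · intro J hJ
    rw [emG_support] at hJ
    obtain ⟨K, _, rfl⟩ := Finset.mem_image.mp hJ
    have h2 : ((∑ i, K.1 i : ℕ) : ℤ) = (j : ℤ) := by exact_mod_cast congrArg (Nat.cast : ℕ → ℤ) K.2.2
    push_cast at h2
    exact h2
  · have := congrArg (fun (g : (Gd n m j →₀ ℂ) →ₗ[ℂ] W n) => g x) (square_G m j)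
    simp only [LinearMap.comp_apply] at this
    rw [← this, hx, map_zero]

/-- Kernel of `fMap` is isomorphic to kernel of `Gmap`. -/
noncomputable def kerEquiv (m : Fin n → ℕ) (j : ℕ) :
    LinearMap.ker (Gmap n m j) ≃ₗ[ℂ] LinearMap.ker (fMap n m j) := by
  have hmem : ∀ c : LinearMap.ker (Gmap n m j),
      ((emGV n m j).comp (LinearMap.ker (Gmap n m j)).subtype) c ∈ LinearMap.ker (fMap n m j) := by
    rintro ⟨x, hx⟩
    rw [LinearMap.mem_ker] at hx ⊢
    have hsq := congrArg (fun (g : (Gd n m j →₀ ℂ) →ₗ[ℂ] V n (j+1)) => g x) (square_GV m j)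
    simp only [LinearMap.comp_apply] at hsq ⊢
    show (fMap n m j) ((emGV n m j) x) = 0
    rw [← hsq, hx, map_zero]
  apply LinearEquiv.ofBijective
    (((emGV n m j).comp (LinearMap.ker (Gmap n m j)).subtype).codRestrict
      (LinearMap.ker (fMap n m j)) hmem)
  constructor
  · intro x y hxy
    apply Subtype.ext
    apply emGV_inj m j
    exact congrArg Subtype.val hxy
  · rintro ⟨y, hy⟩
    rw [LinearMap.mem_ker] at hy
    -- y is supported on good indices
    have hgood : ∀ J ∈ y.support, ∀ i, J.1 i ≤ m i := by
      intro J hJ i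
      have hF : Fbig m (emV n j y) = 0 := by
        have := congrArg (fun (g : V n j →ₗ[ℂ] W n) => g y) (square_V m j)
        simp only [LinearMap.comp_apply] at this
        rw [← this, hy, map_zero]
      have := support_le_of_Fbig_eq_zero m hF J.1 ?_ i
      · exact this
      · rw [emV_support]
        exact Finset.mem_image_of_mem _ hJ
    -- construct a preimage
    classical
    set x : Gd n m j →₀ ℂ := Finsupp.comapDomain (fun (J : Gd n m j) => (⟨J.1, J.2.2⟩ : MIdx n j)) y
      (by
        apply Set.InjOn.mono (Set.subset_univ _)
        intro J _ K _ h
        exact Subtype.ext (congrArg (fun (t : MIdx n j) => t.1) h)) with hxdef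
    have hxy : emGV n m j x = y := by
      rw [emGV, Finsupp.lmapDomain_apply, hxdef]
      apply Finsupp.mapDomain_comapDomain
      · intro J K h
        exact Subtype.ext (congrArg (fun (t : MIdx n j) => t.1) h)
      · intro J hJ
        have h2 := hgood J hJ
        exact ⟨⟨J.1, h2, J.2⟩, rfl⟩
    have hxker : x ∈ LinearMap.ker (Gmap n m j) := by
      rw [LinearMap.mem_ker]
      apply emGV_inj m (j+1)
      have := congrArg (fun (g : (Gd n m j →₀ ℂ) →ₗ[ℂ] V n (j+1)) => g x) (square_GV m j)
      simp only [LinearMap.comp_apply] at this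
      rw [this, hxy, hy, map_zero]
    refine ⟨⟨x, hxker⟩, ?_⟩
    apply Subtype.ext
    exact hxy

/-- The fundamental sum formula. -/
lemma finrank_ker_fMap (m : Fin n → ℕ) (j : ℕ) :
    Module.finrank ℂ (LinearMap.ker (fMap n m j))
      + Module.finrank ℂ (LinearMap.range (Gmap n m j))
      = Fintype.card (Gd n m j) := by
  have h1 : Module.finrank ℂ (LinearMap.ker (fMap n m j))
      = Module.finrank ℂ (LinearMap.ker (Gmap n m j)) :=
    (LinearEquiv.finrank_eq (kerEquiv m j)).symm
  rw [h1, add_comm, LinearMap.finrank_range_add_finrank_ker (Gmap n m j),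
    Module.finrank_finsupp_self]


/-! ### Counting -/

lemma dCount_natCast (m : Fin n → ℕ) (j : ℕ) :
    dCount n m (j : ℤ) = Fintype.card (Gd n m j) := by
  rw [dCount]
  have hset : {J : Fin n → ℕ | (∀ i, J i ≤ m i) ∧ ∑ i, (J i : ℤ) = (j : ℤ)}
      = {J : Fin n → ℕ | (∀ i, J i ≤ m i) ∧ ∑ i, J i = j} := by
    ext J
    simp only [Set.mem_setOf_eq, and_congr_right_iff]
    intro _
    constructor
    · intro h; exact_mod_cast h
    · intro h; exact_mod_cast congrArg (Nat.cast : ℕ → ℤ) h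
  rw [hset, ← Nat.card_coe_set_eq]
  rw [Nat.card_congr (Equiv.subtypeEquivRight (q := fun J => (∀ i, J i ≤ m i) ∧ ∑ i, J i = j)
    (fun J => by simp only [Set.mem_setOf_eq]))]
  exact Nat.card_eq_fintype_card (α := Gd n m j)

lemma dCount_neg_one (m : Fin n → ℕ) : dCount n m (-1) = 0 := by
  rw [dCount]
  have hset : {J : Fin n → ℕ | (∀ i, J i ≤ m i) ∧ ∑ i, (J i : ℤ) = (-1 : ℤ)} = ∅ := by
    ext J
    simp only [Set.mem_setOf_eq, Set.mem_empty_iff_false, iff_false, not_and]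
    intro _
    have : (0:ℤ) ≤ ∑ i, (J i : ℤ) := Finset.sum_nonneg (fun i _ => Int.natCast_nonneg _)
    omega
  rw [hset, Set.ncard_empty]

/-- The flip `J ↦ m − J`. -/
def flip (m : Fin n → ℕ) {j j' : ℕ} (h : j + j' = ∑ i, m i) (J : Gd n m j) : Gd n m j' := by
  refine ⟨fun i => m i - J.1 i, fun i => Nat.sub_le _ _, ?_⟩
  show (∑ i, (m i - J.1 i)) = j'
  have hs : (∑ i, (m i - J.1 i)) + ∑ i, J.1 i = ∑ i, m i := by
    rw [← Finset.sum_add_distrib]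
    apply Finset.sum_congr rfl
    intro i _
    have := J.2.1 i
    omega
  have h2 := J.2.2
  omega

def flipEquiv (m : Fin n → ℕ) {j j' : ℕ} (h : j + j' = ∑ i, m i) : Gd n m j ≃ Gd n m j' where
  toFun := flip m h
  invFun := flip m (by omega)
  left_inv := by
    intro J
    apply Subtype.ext
    funext i
    have := J.2.1 i
    show m i - (m i - J.1 i) = J.1 i
    omega
  right_inv := by
    intro J
    apply Subtype.ext
    funext i
    have := J.2.1 i
    show m i - (m i - J.1 i) = J.1 i
    omega

lemma card_flip (m : Fin n → ℕ) {j j' : ℕ} (h : j + j' = ∑ i, m i) :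
    Fintype.card (Gd n m j) = Fintype.card (Gd n m j') :=
  Fintype.card_congr (flipEquiv m h)

/-! ### Rank symmetry via matrix transpose -/

lemma Gmap_single_apply (m : Fin n → ℕ) (j : ℕ) (J : Gd n m j) (K : Gd n m (j+1)) :
    (Gmap n m j (Finsupp.single J 1)) K
      = ∑ i, if (J.1 i < m i ∧ K.1 = incr J.1 i)
          then ((J.1 i : ℂ) + 1) * ((m i : ℂ) - (J.1 i : ℂ)) else 0 := by
  rw [Gmap, lift_single, one_smul, Finset.sum_apply']
  refine Finset.sum_congr rfl fun i _ => ?_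
  by_cases h : J.1 i < m i
  · simp only [dif_pos h]
    rw [Finsupp.smul_apply, Finsupp.single_apply]
    have hiff : ((⟨incr J.1 i, incr_good J.2.1 h, by rw [sum_incr, J.2.2]⟩ : Gd n m (j+1)) = K)
        ↔ (K.1 = incr J.1 i) := by
      rw [Subtype.ext_iff]
      exact eq_comm
    by_cases hK : K.1 = incr J.1 i
    · rw [if_pos (hiff.mpr hK), if_pos ⟨h, hK⟩, smul_eq_mul, mul_one]
    · rw [if_neg (fun hh => hK (hiff.mp hh)), if_neg (fun hh => hK hh.2), smul_zero]
  · simp only [dif_neg h]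
    rw [if_neg (fun hh => h hh.1)]
    rfl

noncomputable def bas (m : Fin n → ℕ) (j : ℕ) : Module.Basis (Gd n m j) ℂ (Gd n m j →₀ ℂ) :=
  Finsupp.basisSingleOne

lemma rank_toMatrix_eq (m : Fin n → ℕ) (j : ℕ) :
    (LinearMap.toMatrix (bas m j) (bas m (j+1)) (Gmap n m j)).rank
      = Module.finrank ℂ (LinearMap.range (Gmap n m j)) := by
  rw [Matrix.rank_eq_finrank_range_toLin _ (bas m (j+1)) (bas m j), Matrix.toLin_toMatrix]

open Matrix in
lemma finrank_range_flip (m : Fin n → ℕ) (j j' : ℕ) (h : j + j' + 1 = ∑ i, m i) :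
    Module.finrank ℂ (LinearMap.range (Gmap n m j))
      = Module.finrank ℂ (LinearMap.range (Gmap n m j')) := by
  have hσ : (j + 1) + j' = ∑ i, m i := by omega
  have hτ : j + (j' + 1) = ∑ i, m i := by omega
  set σ : Gd n m (j+1) ≃ Gd n m j' := flipEquiv m hσ with hσdef
  set τ : Gd n m j ≃ Gd n m (j'+1) := flipEquiv m hτ with hτdef
  set A := LinearMap.toMatrix (bas m j) (bas m (j+1)) (Gmap n m j) with hA
  set v₁ : Module.Basis (Gd n m j) ℂ (Gd n m (j'+1) →₀ ℂ) := (bas m (j'+1)).reindex τ.symm with hv₁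
  set v₂ : Module.Basis (Gd n m (j+1)) ℂ (Gd n m j' →₀ ℂ) := (bas m j').reindex σ.symm with hv₂
  have hAT : Aᵀ = LinearMap.toMatrix v₂ v₁ (Gmap n m j') := by
    ext J K
    rw [Matrix.transpose_apply, hA, LinearMap.toMatrix_apply, LinearMap.toMatrix_apply]
    rw [hv₁, hv₂, Module.Basis.reindex_apply, Module.Basis.repr_reindex_apply]
    simp only [Equiv.symm_symm]
    simp only [show ∀ (j₀ : ℕ) (x : Gd n m j₀ →₀ ℂ) (a : Gd n m j₀), ((bas m j₀).repr x) a = x a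
      from fun j₀ x a => by rw [bas, Finsupp.basisSingleOne_repr]; rfl]
    simp only [show ∀ (j₀ : ℕ) (a : Gd n m j₀), (bas m j₀) a = Finsupp.single a 1
      from fun j₀ a => by rw [bas]; rfl]
    rw [Gmap_single_apply, Gmap_single_apply]
    refine Finset.sum_congr rfl fun i _ => ?_
    have hJm := J.2.1
    have hKm := K.2.1
    have hστ1 : (σ K).1 = fun a => m a - K.1 a := rfl
    have hστ2 : (τ J).1 = fun a => m a - J.1 a := rfl
    by_cases hc : J.1 i < m i ∧ K.1 = incr J.1 i
    · obtain ⟨h1, h2⟩ := hc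
      have h2' := fun a => congrFun h2 a
      have hKi : K.1 i = J.1 i + 1 := by rw [h2' i, incr_self]
      have hcond2 : (σ K).1 i < m i ∧ (τ J).1 = incr ((σ K).1) i := by
        constructor
        · rw [hστ1]
          simp only
          omega
        · funext a
          by_cases ha : a = i
          · rw [ha, hστ2, hστ1, incr_self]
            simp only
            omega
          · rw [hστ2, hστ1, incr_ne _ ha]
            simp only
            have := h2' a
            rw [incr_ne _ ha] at this
            omega
      rw [if_pos ⟨h1, h2⟩, if_pos hcond2]
      rw [hστ1]
      simp only
      have hsub : ((m i - K.1 i : ℕ) : ℂ) = (m i : ℂ) - (K.1 i : ℂ) := by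
        push_cast [Nat.cast_sub (hKm i)]
        ring
      rw [hsub]
      have hKic : (K.1 i : ℂ) = (J.1 i : ℂ) + 1 := by exact_mod_cast congrArg (Nat.cast : ℕ → ℂ) hKi
      rw [hKic]
      ring
    · rw [if_neg hc, if_neg]
      intro hcond2
      apply hc
      obtain ⟨h1, h2⟩ := hcond2
      rw [hστ1] at h1
      simp only at h1
      have h2' := fun a => congrFun h2 a
      have hKi : K.1 i ≥ 1 := by omega
      have hJi : m i - J.1 i = (m i - K.1 i) + 1 := by
        have := h2' i
        rw [hστ2, hστ1, incr_self] at this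
        simpa using this
      constructor
      · have := hJm i
        omega
      · funext a
        by_cases ha : a = i
        · rw [ha, incr_self]
          have h3 := hJm i
          have h4 := hKm i
          omega
        · rw [incr_ne _ ha]
          have := h2' a
          rw [hστ2, hστ1, incr_ne _ ha] at this
          simp only at this
          have h3 := hJm a
          have h4 := hKm a
          omega
  calc Module.finrank ℂ (LinearMap.range (Gmap n m j))
      = A.rank := (rank_toMatrix_eq m j).symm
    _ = Aᵀ.rank := (Matrix.rank_transpose A).symm
    _ = Module.finrank ℂ (LinearMap.range (Gmap n m j')) := by
        rw [hAT, Matrix.rank_eq_finrank_range_toLin _ v₁ v₂, Matrix.toLin_toMatrix]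

theorem kernel_dim_resonant' (n k : ℕ) (hn : 1 ≤ n) (hk : 1 ≤ k) (m : Fin n → ℕ)
    (h0 : 0 ≤ (∑ i, (m i : ℤ)) - k + 1) (h1 : (∑ i, (m i : ℤ)) - k + 1 < k) :
    (Module.finrank ℂ (LinearMap.ker (fMap n m (k - 1))) : ℤ)
      = w n m ((∑ i, (m i : ℤ)) - k + 1) := by
  have hM : (∑ i, m i : ℕ) = ∑ i, m i := rfl
  set M : ℕ := ∑ i, m i with hMdef
  have hMZ : (∑ i, (m i : ℤ)) = (M : ℤ) := by rw [hMdef]; push_cast; ring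
  rw [hMZ] at h0 h1 ⊢
  have hsum := finrank_ker_fMap m (k-1)
  have hk' : k - 1 + 1 = k := by omega
  rw [w]
  by_cases hcase : k ≤ M
  · have hrange : Module.finrank ℂ (LinearMap.range (Gmap n m (k-1)))
        = Fintype.card (Gd n m (M - k)) := by
      rw [finrank_range_flip m (k-1) (M-k) (by omega)]
      have hinj := Gmap_inj m (M-k) (by rw [← hMdef]; omega)
      rw [LinearMap.finrank_range_of_inj hinj, Module.finrank_finsupp_self]
    have hcard : Fintype.card (Gd n m (k-1)) = Fintype.card (Gd n m (M-k+1)) :=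
      card_flip m (by rw [← hMdef]; omega)
    have hd1 : dCount n m ((M:ℤ) - k + 1) = Fintype.card (Gd n m (M-k+1)) := by
      rw [show ((M:ℤ) - k + 1) = ((M - k + 1 : ℕ) : ℤ) by push_cast; omega, dCount_natCast]
    have hd2 : dCount n m ((M:ℤ) - k + 1 - 1) = Fintype.card (Gd n m (M-k)) := by
      rw [show ((M:ℤ) - k + 1 - 1) = ((M - k : ℕ) : ℤ) by push_cast; omega, dCount_natCast]
    rw [hd1, hd2]
    rw [hrange, hcard] at hsum
    omega
  · have hk1 : k = M + 1 := by omega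
    have hempty : IsEmpty (Gd n m (k-1+1)) := by
      constructor
      rintro ⟨J, hJ1, hJ2⟩
      have hs : (∑ i, J i) ≤ ∑ i, m i := Finset.sum_le_sum (fun i _ => hJ1 i)
      rw [hJ2, ← hMdef] at hs
      omega
    have hrange0 : Module.finrank ℂ (LinearMap.range (Gmap n m (k-1))) = 0 := by
      have hle : Module.finrank ℂ (LinearMap.range (Gmap n m (k-1)))
          ≤ Module.finrank ℂ (Gd n m (k-1+1) →₀ ℂ) := Submodule.finrank_le _
      rw [Module.finrank_finsupp_self] at hle
      have hc0 : Fintype.card (Gd n m (k-1+1)) = 0 := Fintype.card_eq_zero_iff.mpr hempty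
      omega
    rw [hrange0] at hsum
    have hcard : Fintype.card (Gd n m (k-1)) = Fintype.card (Gd n m 0) := by
      apply card_flip m
      rw [← hMdef]; omega
    have hd1 : dCount n m ((M:ℤ) - k + 1) = Fintype.card (Gd n m 0) := by
      rw [show ((M:ℤ) - k + 1) = ((0 : ℕ) : ℤ) by omega, dCount_natCast]
    have hd2 : dCount n m ((M:ℤ) - k + 1 - 1) = 0 := by
      rw [show ((M:ℤ) - k + 1 - 1) = (-1 : ℤ) by omega]
      exact dCount_neg_one m
    rw [hd1, hd2]
    rw [hcard] at hsum
    omega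

end KDR

/-- If `0 ≤ |m| − k + 1 < k`, then `dim ker (f_{k,m} : V_{k−1} → V_k) = w(m, |m| − k + 1)`. -/
theorem kernel_dim_resonant (n k : ℕ) (hn : 1 ≤ n) (hk : 1 ≤ k) (m : Fin n → ℕ)
    (h0 : 0 ≤ (∑ i, (m i : ℤ)) - k + 1) (h1 : (∑ i, (m i : ℤ)) - k + 1 < k) :
    (Module.finrank ℂ (LinearMap.ker (fMap n m (k - 1))) : ℤ)
      = w n m ((∑ i, (m i : ℤ)) - k + 1) :=
  KDR.kernel_dim_resonant' n k hn hk m h0 h1
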